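/- Let T be a rooted spanning tree of a finite connected graph G. Within each bridge-equivalence class B of G, there is a unique vertex of B that is an ancestor (in T) of all vertices of B. -/

import Mathlib

/-- `u` is an ancestor of `v` in the spanning tree `T` rooted at `r`. -/
def SimpleGraph.IsAncestor {V : Type*} (T : SimpleGraph V) (r u v : V) : Prop :=
  ∀ p : T.Walk r v, p.IsPath → u ∈ p.support

/-- `u` and `v` are bridge-equivalent: `u = v` or there is a walk from `u` to `v`
none of whose edges is a bridge of `G`. -/
def SimpleGraph.BridgeEquiv {V : Type*} (G : SimpleGraph V) (u v : V) : Prop :=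
  u = v ∨ ∃ w : G.Walk u v, ∀ e ∈ w.edges, ¬ G.IsBridge e

section Aux

open SimpleGraph

variable {V : Type*} [DecidableEq V] {T G : SimpleGraph V} {r : V}

lemma aux_anc_of_path (hT : T.IsTree) {u v : V} (p : T.Walk r v) (hp : p.IsPath)
    (hu : u ∈ p.support) : T.IsAncestor r u v := by
  intro q hq
  rw [(hT.existsUnique_path r v).unique hq hp]
  exact hu

lemma aux_anc_refl {v : V} : T.IsAncestor r v v :=
  fun p _ => p.end_mem_support

lemma aux_anc_trans (hT : T.IsTree) {a x y : V} (h1 : T.IsAncestor r a x)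
    (h2 : T.IsAncestor r x y) : T.IsAncestor r a y := by
  intro p hp
  have hx : x ∈ p.support := h2 p hp
  exact p.support_takeUntil_subset hx (h1 (p.takeUntil x hx) (hp.takeUntil hx))

lemma aux_anc_length (hT : T.IsTree) {a b : V} (h : T.IsAncestor r a b)
    (p : T.Walk r a) (hp : p.IsPath) (q : T.Walk r b) (hq : q.IsPath) :
    p.length ≤ q.length ∧ (p.length = q.length → a = b) := by
  have ha : a ∈ q.support := h q hq
  have hpq : p = q.takeUntil a ha := (hT.existsUnique_path r a).unique hp (hq.takeUntil ha)
  have hlen : (q.takeUntil a ha).length + (q.dropUntil a ha).length = q.length := by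
    rw [← SimpleGraph.Walk.length_append, q.take_spec ha]
  constructor
  · rw [hpq]; omega
  · intro he
    rw [hpq] at he
    exact SimpleGraph.Walk.eq_of_length_eq_zero (p := q.dropUntil a ha) (by omega)

lemma aux_anc_total (hT : T.IsTree) {a y x : V} (h1 : T.IsAncestor r a x)
    (h2 : T.IsAncestor r y x) : T.IsAncestor r a y ∨ T.IsAncestor r y a := by
  obtain ⟨p, hp, -⟩ := hT.existsUnique_path r x
  have ha : a ∈ p.support := h1 p hp
  have hy : y ∈ p.support := h2 p hp
  by_cases haq : a ∈ (p.takeUntil y hy).support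
  · exact Or.inl (aux_anc_of_path hT _ (hp.takeUntil hy) haq)
  · right
    set d := p.dropUntil y hy with hd
    have hdp : d.IsPath := hp.dropUntil hy
    have hsplit : p.support = (p.takeUntil y hy).support ++ d.support.tail := by
      conv_lhs => rw [← p.take_spec hy]
      exact SimpleGraph.Walk.support_append _ _
    have had : a ∈ d.support.tail := by
      have := ha
      rw [hsplit, List.mem_append] at this
      tauto
    have had' : a ∈ d.support := List.mem_of_mem_tail had
    set w2 := d.takeUntil a had' with hw2def
    have hw2 : w2.IsPath := hdp.takeUntil had'
    have hPpath : ((p.takeUntil y hy).append w2).IsPath := by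
      rw [SimpleGraph.Walk.isPath_def, SimpleGraph.Walk.support_append]
      have hnodup : ((p.takeUntil y hy).support ++ d.support.tail).Nodup := by
        rw [← hsplit]; exact hp.support_nodup
      have hsub : w2.support.tail ⊆ d.support.tail := by
        intro z hz
        have hz1 : z ∈ d.support := d.support_takeUntil_subset had' (List.mem_of_mem_tail hz)
        have hzy : z ≠ y := by
          intro hzy
          have := hw2.support_nodup
          rw [SimpleGraph.Walk.support_eq_cons] at this
          exact (List.nodup_cons.mp this).1 (hzy ▸ hz)
        rw [SimpleGraph.Walk.support_eq_cons] at hz1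
        rcases List.mem_cons.mp hz1 with h | h
        · exact absurd h hzy
        · exact h
      rw [List.nodup_append'] at hnodup
      exact List.nodup_append'.mpr ⟨hnodup.1, hw2.support_nodup.tail,
        fun z hz hz2 => hnodup.2.2 hz (hsub hz2)⟩
    refine aux_anc_of_path hT ((p.takeUntil y hy).append w2) hPpath ?_
    rw [SimpleGraph.Walk.mem_support_append_iff]
    exact Or.inl (SimpleGraph.Walk.end_mem_support _)

lemma aux_be_symm {u v : V} (h : G.BridgeEquiv u v) : G.BridgeEquiv v u := by
  rcases h with rfl | ⟨w, hw⟩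
  · exact Or.inl rfl
  · exact Or.inr ⟨w.reverse, fun e he => hw e (by rwa [SimpleGraph.Walk.edges_reverse,
      List.mem_reverse] at he)⟩

lemma aux_be_trans {u v x : V} (h1 : G.BridgeEquiv u v) (h2 : G.BridgeEquiv v x) :
    G.BridgeEquiv u x := by
  rcases h1 with rfl | ⟨w1, hw1⟩
  · exact h2
  · rcases h2 with rfl | ⟨w2, hw2⟩
    · exact Or.inr ⟨w1, hw1⟩
    · refine Or.inr ⟨w1.append w2, fun e he => ?_⟩
      rw [SimpleGraph.Walk.edges_append, List.mem_append] at he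
      rcases he with h | h
      exacts [hw1 e h, hw2 e h]

end Aux

theorem representative_node_exists_unique {V : Type*} [Fintype V]
    (G T : SimpleGraph V) (r : V)
    (hG : G.Connected) (hle : T ≤ G) (hT : T.IsTree)
    (hdfs : ∀ x y : V, G.Adj x y →
      T.IsAncestor r x y ∨ T.IsAncestor r y x)
    (B : Set V) (u : V) (hB : B = {v : V | G.BridgeEquiv u v}) :
    ∃! a : V, a ∈ B ∧ ∀ b ∈ B, T.IsAncestor r a b := by
  classical
  have huB : u ∈ B := by rw [hB]; exact Or.inl rfl
  set f : V → ℕ := fun v => (hT.existsUnique_path r v).choose.length with hf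
  have hfp : ∀ v, (hT.existsUnique_path r v).choose.IsPath :=
    fun v => (hT.existsUnique_path r v).choose_spec.1
  obtain ⟨a, haB, hamin⟩ := Set.exists_min_image B f (Set.toFinite B) ⟨u, huB⟩
  -- a dominates B
  have key : ∀ {x b : V} (w : G.Walk x b), (∀ e ∈ w.edges, ¬ G.IsBridge e) →
      x ∈ B → T.IsAncestor r a x → T.IsAncestor r a b := by
    intro x b w
    induction w with
    | nil => exact fun _ _ h => h
    | @cons x y b hadj w ih =>
      intro hbr hxB hax
      have hyB : y ∈ B := by
        rw [hB] at hxB ⊢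
        refine aux_be_trans hxB (Or.inr ⟨SimpleGraph.Walk.cons hadj SimpleGraph.Walk.nil, ?_⟩)
        intro e he
        simp only [SimpleGraph.Walk.edges_cons, SimpleGraph.Walk.edges_nil,
          List.mem_singleton] at he
        subst he
        exact hbr _ (by simp)
      have hay : T.IsAncestor r a y := by
        rcases hdfs x y hadj with hxy | hyx
        · exact aux_anc_trans hT hax hxy
        · rcases aux_anc_total hT hax hyx with h | h
          · exact h
          · -- y is an ancestor of a; by minimality y = a
            obtain ⟨hle1, heq1⟩ := aux_anc_length hT h
              (hT.existsUnique_path r y).choose (hfp y)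
              (hT.existsUnique_path r a).choose (hfp a)
            have : y = a := heq1 (le_antisymm hle1 (hamin y hyB))
            subst this
            exact aux_anc_refl
      exact ih (fun e he => hbr e (List.mem_cons_of_mem _ he)) hyB hay
  have hdom : ∀ b ∈ B, T.IsAncestor r a b := by
    intro b hbB
    have hab : G.BridgeEquiv a b := by
      rw [hB] at haB hbB
      exact aux_be_trans (aux_be_symm haB) hbB
    rcases hab with rfl | ⟨w, hw⟩
    · exact aux_anc_refl
    · exact key w hw haB aux_anc_refl
  exact ⟨a, ⟨haB, hdom⟩, fun a' ⟨ha'B, ha'dom⟩ => by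
    have h1 := ha'dom a haB
    have h2 := hdom a' ha'B
    obtain ⟨hle1, heq1⟩ := aux_anc_length hT h1
      (hT.existsUnique_path r a').choose (hfp a')
      (hT.existsUnique_path r a).choose (hfp a)
    obtain ⟨hle2, -⟩ := aux_anc_length hT h2
      (hT.existsUnique_path r a).choose (hfp a)
      (hT.existsUnique_path r a').choose (hfp a')
    exact heq1 (le_antisymm hle1 hle2)⟩
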